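/- Let (U, λ), (Z, μ), (V, ν) be σ-finite measure spaces. Let q_u : U → [0,∞) be a measurable probability density (∫ q_u dλ = 1), let q_z : U × Z → (0,∞) be a probability kernel density (∫ q_z(u,z) dμ(z) = 1 for all u), let p_v : Z × V → (0,∞) be a probability kernel density (∫ p_v(z,v) dν(v) = 1 for all z), and let γ : V × Z → [0,∞) be measurable. Sample u with law q_u·λ, then conditionally z with law q_z(u,·)·μ, then conditionally v with law p_v(z,·)·ν, and set w := γ(v,z) / (q_z(u,z)·p_v(z,v)). Then (( v, z), w) is strictly properly weighted for γ: for every measurable h : V × Z → [0,∞], E[w · h(v,z)] = ∫∫ γ(v,z) h(v,z) dν(v) dμ(z). -/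

import Mathlib

open MeasureTheory ProbabilityTheory ENNReal NNReal

/-- The implicit auxiliary-variable construction: sampling `u ~ q_u`, then
`z ~ q_z(u,·)`, then `v ~ p_v(z,·)`, and weighting by
`γ(v,z) / (q_z(u,z)·p_v(z,v))` is strictly properly weighted for `γ`. -/
theorem implicit_auxiliary_variable_strictly_properly_weighted
    {U Z V α : Type*} [MeasurableSpace U] [MeasurableSpace Z] [MeasurableSpace V]
    [MeasurableSpace α]
    (lam : Measure U) [SigmaFinite lam]
    (μ : Measure Z) [SigmaFinite μ]
    (ν : Measure V) [SigmaFinite ν]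
    (P : Measure α) [IsProbabilityMeasure P]
    (qu : U → ℝ≥0) (hqu : Measurable qu) (hqu1 : ∫⁻ u, (qu u : ℝ≥0∞) ∂lam = 1)
    (qz : U × Z → ℝ≥0) (hqz : Measurable qz) (hqzpos : ∀ p, 0 < qz p)
    (hqz1 : ∀ u, ∫⁻ z, (qz (u, z) : ℝ≥0∞) ∂μ = 1)
    (pv : Z × V → ℝ≥0) (hpv : Measurable pv) (hpvpos : ∀ p, 0 < pv p)
    (hpv1 : ∀ z, ∫⁻ v, (pv (z, v) : ℝ≥0∞) ∂ν = 1)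
    (γ : V × Z → ℝ≥0) (hγ : Measurable γ)
    (u : α → U) (z : α → Z) (v : α → V)
    (hu : Measurable u) (hz : Measurable z) (hv : Measurable v)
    (hlaw : ∀ g : U × Z × V → ℝ≥0∞, Measurable g →
      ∫⁻ a, g (u a, z a, v a) ∂P
        = ∫⁻ x, (qu x : ℝ≥0∞) *
            ∫⁻ y, (qz (x, y) : ℝ≥0∞) *
              ∫⁻ s, (pv (y, s) : ℝ≥0∞) * g (x, y, s) ∂ν ∂μ ∂lam) :
    ∀ h : V × Z → ℝ≥0∞, Measurable h →
      ∫⁻ a, ((γ (v a, z a) / (qz (u a, z a) * pv (z a, v a)) : ℝ≥0) : ℝ≥0∞) *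
          h (v a, z a) ∂P
        = ∫⁻ y, ∫⁻ s, (γ (s, y) : ℝ≥0∞) * h (s, y) ∂ν ∂μ := by
  intro h hh
  set g : U × Z × V → ℝ≥0∞ := fun p =>
    ((γ (p.2.2, p.2.1) / (qz (p.1, p.2.1) * pv (p.2.1, p.2.2)) : ℝ≥0) : ℝ≥0∞) *
      h (p.2.2, p.2.1) with hg
  have hgm : Measurable g := by
    apply Measurable.mul
    · exact ((hγ.comp (measurable_snd.snd.prodMk measurable_snd.fst)).div
        ((hqz.comp (measurable_fst.prodMk measurable_snd.fst)).mul
         (hpv.comp (measurable_snd.fst.prodMk measurable_snd.snd)))).coe_nnreal_ennreal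
    · exact hh.comp (measurable_snd.snd.prodMk measurable_snd.fst)
  have key := hlaw g hgm
  have hcancel : ∀ (x : U) (y : Z) (s : V),
      (qz (x, y) : ℝ≥0∞) * ((pv (y, s) : ℝ≥0∞) * g (x, y, s))
        = (γ (s, y) : ℝ≥0∞) * h (s, y) := by
    intro x y s
    have hq0 : (qz (x, y) : ℝ≥0∞) ≠ 0 := by
      exact_mod_cast (hqzpos (x, y)).ne'
    have hp0 : (pv (y, s) : ℝ≥0∞) ≠ 0 := by
      exact_mod_cast (hpvpos (y, s)).ne'
    have hqt : (qz (x, y) : ℝ≥0∞) ≠ ⊤ := ENNReal.coe_ne_top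
    have hpt : (pv (y, s) : ℝ≥0∞) ≠ ⊤ := ENNReal.coe_ne_top
    have hd : ((qz (x, y) * pv (y, s) : ℝ≥0)) ≠ 0 :=
      mul_ne_zero (hqzpos (x, y)).ne' (hpvpos (y, s)).ne'
    simp only [hg, ENNReal.coe_div hd, ENNReal.coe_mul]
    rw [← mul_assoc, ← mul_assoc, ENNReal.mul_div_cancel (by exact mul_ne_zero hq0 hp0)
      (ENNReal.mul_ne_top hqt hpt)]
  have key2 : (∫⁻ a, g (u a, z a, v a) ∂P)
      = ∫⁻ x, (qu x : ℝ≥0∞) * ∫⁻ y, (qz (x, y) : ℝ≥0∞) *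
          ∫⁻ s, (pv (y, s) : ℝ≥0∞) * g (x, y, s) ∂ν ∂μ ∂lam := key
  calc ∫⁻ a, ((γ (v a, z a) / (qz (u a, z a) * pv (z a, v a)) : ℝ≥0) : ℝ≥0∞) *
          h (v a, z a) ∂P
      = ∫⁻ a, g (u a, z a, v a) ∂P := rfl
    _ = ∫⁻ x, (qu x : ℝ≥0∞) * ∫⁻ y, (qz (x, y) : ℝ≥0∞) *
          ∫⁻ s, (pv (y, s) : ℝ≥0∞) * g (x, y, s) ∂ν ∂μ ∂lam := key
    _ = ∫⁻ x, (qu x : ℝ≥0∞) * ∫⁻ y, ∫⁻ s, (γ (s, y) : ℝ≥0∞) * h (s, y) ∂ν ∂μ ∂lam := by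
        congr 1; ext x
        congr 1
        refine lintegral_congr fun y => ?_
        rw [← lintegral_const_mul _ (by
          exact (hpv.comp (measurable_const.prodMk measurable_id)).coe_nnreal_ennreal.mul
            (hgm.comp (measurable_const.prodMk (measurable_const.prodMk measurable_id))))]
        exact lintegral_congr fun s => hcancel x y s
    _ = ∫⁻ y, ∫⁻ s, (γ (s, y) : ℝ≥0∞) * h (s, y) ∂ν ∂μ := by
        rw [lintegral_mul_const _ hqu.coe_nnreal_ennreal, hqu1, one_mul]
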